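/- If the attack parameter is underestimated, the defense degenerates to the target policy: if ε† > ε_D > 0 and R̂ = A(R̄, π†, ε†) (so ρ̂^{π†} ≥ ρ̂^{π{s;a}} + ε† for all neighbor policies), then the set {R : R̂ = A(R, π†, ε) for some 0 < ε ≤ ε_D} equals {R̂}, and consequently the solution of the robust defense problem max_π min over this set of ρ^π is the unique maximizer of ρ̂, namely π† itself. -/

import Mathlib

open scoped BigOperators

structure MDP (S A : Type) [Fintype S] [Fintype A] where
  P : S → A → S → ℝ
  σ : S → ℝ
  γ : ℝ
  P_nonneg : ∀ s a s', 0 ≤ P s a s'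
  P_sum : ∀ s a, ∑ s', P s a s' = 1
  σ_nonneg : ∀ s, 0 ≤ σ s
  σ_sum : ∑ s, σ s = 1
  γ_nonneg : 0 ≤ γ
  γ_lt_one : γ < 1

variable {S A : Type} [Fintype S] [Fintype A]

/-- A stochastic stationary policy: `π s a` is the probability of action `a` in state `s`. -/
def isPolicy (π : S → A → ℝ) : Prop :=
  (∀ s a, 0 ≤ π s a) ∧ ∀ s, ∑ a, π s a = 1

/-- `saDist M π t s a` is the probability that `(s_{t+1}, a_{t+1}) = (s, a)`
(time indexed from 1 in the paper, from 0 here) under policy `π`. -/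
def saDist (M : MDP S A) (π : S → A → ℝ) : ℕ → S → A → ℝ
  | 0 => fun s a => M.σ s * π s a
  | t + 1 => fun s a => (∑ s', ∑ a', saDist M π t s' a' * M.P s' a' s) * π s a

/-- Discounted state-action occupancy measure
`ψ^π(s,a) = E[(1-γ) Σ_{t≥1} γ^{t-1} 1{s_t=s, a_t=a}]`. -/
noncomputable def occ (M : MDP S A) (π : S → A → ℝ) (s : S) (a : A) : ℝ :=
  (1 - M.γ) * ∑' t : ℕ, M.γ ^ t * saDist M π t s a

/-- Inner product of two `|S|·|A|`-dimensional vectors. -/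
def dot (ψ R : S → A → ℝ) : ℝ := ∑ s, ∑ a, ψ s a * R s a

/-- The score `ρ^π = ⟨ψ^π, R⟩`. -/
noncomputable def score (M : MDP S A) (π : S → A → ℝ) (R : S → A → ℝ) : ℝ :=
  dot (occ M π) R

/-- `stDist M π t s` is the probability that `s_{t+1} = s`. -/
def stDist (M : MDP S A) (π : S → A → ℝ) : ℕ → S → ℝ
  | 0 => M.σ
  | t + 1 => fun s => ∑ s', ∑ a', stDist M π t s' * π s' a' * M.P s' a' s

/-- Discounted state occupancy measure `μ^π(s) = E[(1-γ) Σ_{t≥1} γ^{t-1} 1{s_t=s}]`. -/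
noncomputable def stateOcc (M : MDP S A) (π : S → A → ℝ) (s : S) : ℝ :=
  (1 - M.γ) * ∑' t : ℕ, M.γ ^ t * stDist M π t s

/-- The stochastic policy corresponding to a deterministic policy `d : S → A`. -/
def detPol [DecidableEq A] (d : S → A) : S → A → ℝ :=
  fun s a => if a = d s then 1 else 0

/-- The neighbor policy `π†{s;a}`, following `a ≠ π†(s)` in `s` and `π†` elsewhere. -/
def neighbor [DecidableEq S] (πd : S → A) (s : S) (a : A) : S → A :=
  fun s' => if s' = s then a else πd s'

/-- Score of policy `π` for rewards given as Euclidean vectors over `S × A`. -/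
noncomputable def scoreE (M : MDP S A) (π : S → A → ℝ)
    (R : EuclideanSpace ℝ (S × A)) : ℝ :=
  ∑ p : S × A, occ M π p.1 p.2 * R p

/-- Membership in the attack constraint set `C_ε`: π† beats every neighbor policy by
margin ε. -/
def inC [DecidableEq S] [DecidableEq A] (M : MDP S A) (πt : S → A) (ε : ℝ)
    (R : EuclideanSpace ℝ (S × A)) : Prop :=
  ∀ s a, a ≠ πt s →
    scoreE M (detPol πt) R ≥ scoreE M (detPol (neighbor πt s a)) R + ε

/-- `isAttack M πt ε R' Rh` : `Rh = A(R', πt, ε)` is the Euclidean projection of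
`R'` onto `C_ε`, i.e. the closest feasible reward to `R'`. -/
def isAttack [DecidableEq S] [DecidableEq A] (M : MDP S A) (πt : S → A) (ε : ℝ)
    (Rorig Rh : EuclideanSpace ℝ (S × A)) : Prop :=
  inC M πt ε Rh ∧ ∀ R₂, inC M πt ε R₂ → ‖Rh - Rorig‖ ≤ ‖R₂ - Rorig‖


set_option linter.unusedSectionVars false

section Aux
variable {S A : Type} [Fintype S] [Fintype A]

lemma detPol_isPolicy [DecidableEq A] (d : S → A) : isPolicy (detPol d) := by
  constructor
  · intro s a; unfold detPol; positivity
  · intro s; simp [detPol]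

lemma stDist_nonneg (M : MDP S A) {π : S → A → ℝ} (hπ : isPolicy π) :
    ∀ t s, 0 ≤ stDist M π t s := by
  intro t
  induction t with
  | zero => exact M.σ_nonneg
  | succ t ih =>
    intro s
    apply Finset.sum_nonneg; intro s' _
    apply Finset.sum_nonneg; intro a' _
    have := M.P_nonneg s' a' s
    have := hπ.1 s' a'
    have := ih s'
    positivity

lemma stDist_sum (M : MDP S A) {π : S → A → ℝ} (hπ : isPolicy π) :
    ∀ t, ∑ s, stDist M π t s = 1 := by
  intro t
  induction t with
  | zero => exact M.σ_sum
  | succ t ih =>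
    show ∑ s, ∑ s', ∑ a', stDist M π t s' * π s' a' * M.P s' a' s = 1
    rw [Finset.sum_comm]
    have : ∀ s', ∑ s, ∑ a', stDist M π t s' * π s' a' * M.P s' a' s
        = stDist M π t s' := by
      intro s'
      rw [Finset.sum_comm]
      have : ∀ a', ∑ s, stDist M π t s' * π s' a' * M.P s' a' s
          = stDist M π t s' * π s' a' := by
        intro a'
        rw [← Finset.mul_sum, M.P_sum, mul_one]
      rw [Finset.sum_congr rfl fun a' _ => this a', ← Finset.mul_sum, hπ.2, mul_one]
    rw [Finset.sum_congr rfl fun s' _ => this s', ih]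

lemma stDist_le_one (M : MDP S A) {π : S → A → ℝ} (hπ : isPolicy π) (t : ℕ) (s : S) :
    stDist M π t s ≤ 1 := by
  have h := stDist_sum M hπ t
  calc stDist M π t s ≤ ∑ s', stDist M π t s' :=
        Finset.single_le_sum (fun s' _ => stDist_nonneg M hπ t s') (Finset.mem_univ s)
    _ = 1 := h

lemma saDist_eq (M : MDP S A) (π : S → A → ℝ) :
    ∀ t s a, saDist M π t s a = stDist M π t s * π s a := by
  intro t
  induction t with
  | zero => intro s a; rfl
  | succ t ih =>
    intro s a
    show (∑ s', ∑ a', saDist M π t s' a' * M.P s' a' s) * π s a = _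
    congr 1
    apply Finset.sum_congr rfl; intro s' _
    apply Finset.sum_congr rfl; intro a' _
    rw [ih]

lemma summable_stDist (M : MDP S A) {π : S → A → ℝ} (hπ : isPolicy π) (s : S) :
    Summable (fun t => M.γ ^ t * stDist M π t s) := by
  apply Summable.of_nonneg_of_le (fun t => by
      have := stDist_nonneg M hπ t s
      have := M.γ_nonneg
      positivity)
    (fun t => by
      have h1 := stDist_le_one M hπ t s
      have : (0:ℝ) ≤ M.γ ^ t := pow_nonneg M.γ_nonneg t
      nlinarith)
    (summable_geometric_of_lt_one M.γ_nonneg M.γ_lt_one)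

lemma π_le_one {π : S → A → ℝ} (hπ : isPolicy π) (s : S) (a : A) : π s a ≤ 1 := by
  have h := hπ.2 s
  calc π s a ≤ ∑ a', π s a' :=
        Finset.single_le_sum (fun a' _ => hπ.1 s a') (Finset.mem_univ a)
    _ = 1 := h

lemma summable_saDist (M : MDP S A) {π : S → A → ℝ} (hπ : isPolicy π) (s : S) (a : A) :
    Summable (fun t => M.γ ^ t * saDist M π t s a) := by
  simp only [saDist_eq]
  apply Summable.of_nonneg_of_le (fun t => by
      have := stDist_nonneg M hπ t s
      have := hπ.1 s a
      have := M.γ_nonneg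
      positivity)
    (fun t => by
      have h1 := stDist_le_one M hπ t s
      have h2 := π_le_one hπ s a
      have h3 := stDist_nonneg M hπ t s
      have h4 := hπ.1 s a
      have h5 : (0:ℝ) ≤ M.γ ^ t := pow_nonneg M.γ_nonneg t
      have h6 : stDist M π t s * π s a ≤ 1 := mul_le_one₀ h1 h4 h2
      calc M.γ ^ t * (stDist M π t s * π s a) ≤ M.γ ^ t * 1 := by nlinarith
        _ = M.γ ^ t := mul_one _)
    (summable_geometric_of_lt_one M.γ_nonneg M.γ_lt_one)

lemma occ_eq (M : MDP S A) (π : S → A → ℝ) (s : S) (a : A) :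
    occ M π s a = stateOcc M π s * π s a := by
  unfold occ stateOcc
  rw [mul_assoc]
  congr 1
  rw [← tsum_mul_right]
  congr 1; funext t
  rw [saDist_eq]; ring

end Aux
section Aux2
variable {S A : Type} [Fintype S] [Fintype A]

noncomputable def expR (M : MDP S A) (d : S → A) (f : S → ℝ) : ℕ → S → ℝ
  | 0 => f
  | t + 1 => fun s => ∑ s', M.P s (d s) s' * expR M d f t s'

lemma expR_abs_le (M : MDP S A) (d : S → A) (f : S → ℝ) :
    ∀ t s, |expR M d f t s| ≤ ∑ s', |f s'| := by
  intro t
  induction t with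
  | zero =>
    intro s
    exact Finset.single_le_sum (fun s' _ => abs_nonneg (f s')) (Finset.mem_univ s)
  | succ t ih =>
    intro s
    show |∑ s', M.P s (d s) s' * expR M d f t s'| ≤ _
    calc |∑ s', M.P s (d s) s' * expR M d f t s'|
        ≤ ∑ s', |M.P s (d s) s' * expR M d f t s'| := Finset.abs_sum_le_sum_abs _ _
      _ ≤ ∑ s', M.P s (d s) s' * (∑ s'', |f s''|) := by
          apply Finset.sum_le_sum; intro s' _
          rw [abs_mul, abs_of_nonneg (M.P_nonneg s (d s) s')]
          exact mul_le_mul_of_nonneg_left (ih s') (M.P_nonneg s (d s) s')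
      _ = ∑ s'', |f s''| := by rw [← Finset.sum_mul, M.P_sum, one_mul]

lemma summable_expR (M : MDP S A) (d : S → A) (f : S → ℝ) (s : S) :
    Summable (fun t => M.γ ^ t * expR M d f t s) := by
  apply Summable.of_norm_bounded
    ((summable_geometric_of_lt_one M.γ_nonneg M.γ_lt_one).mul_right (∑ s', |f s'|))
  intro t
  rw [Real.norm_eq_abs, abs_mul, abs_of_nonneg (pow_nonneg M.γ_nonneg t)]
  exact mul_le_mul_of_nonneg_left (expR_abs_le M d f t s) (pow_nonneg M.γ_nonneg t)

noncomputable def Vd (M : MDP S A) (d : S → A) (f : S → ℝ) (s : S) : ℝ :=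
  ∑' t : ℕ, M.γ ^ t * expR M d f t s

lemma Vd_bellman (M : MDP S A) (d : S → A) (f : S → ℝ) (s : S) :
    Vd M d f s = f s + M.γ * ∑ s', M.P s (d s) s' * Vd M d f s' := by
  unfold Vd
  rw [Summable.tsum_eq_zero_add (summable_expR M d f s)]
  congr 1
  · simp [expR]
  have h1 : ∀ t : ℕ, M.γ ^ (t+1) * expR M d f (t+1) s
      = ∑ s', M.γ * (M.P s (d s) s' * (M.γ ^ t * expR M d f t s')) := by
    intro t
    show M.γ ^ (t+1) * ∑ s', M.P s (d s) s' * expR M d f t s' = _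
    rw [Finset.mul_sum]
    apply Finset.sum_congr rfl; intro s' _; ring
  rw [tsum_congr h1, Summable.tsum_finsetSum (fun s' _ => by
    apply Summable.mul_left
    exact (summable_expR M d f s').mul_left _)]
  rw [Finset.mul_sum]
  apply Finset.sum_congr rfl; intro s' _
  rw [tsum_mul_left, tsum_mul_left]

lemma stDist_det [DecidableEq A] (M : MDP S A) (d : S → A) (t : ℕ) (s : S) :
    stDist M (detPol d) (t+1) s = ∑ s', stDist M (detPol d) t s' * M.P s' (d s') s := by
  show (∑ s', ∑ a', stDist M (detPol d) t s' * detPol d s' a' * M.P s' a' s) = _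
  apply Finset.sum_congr rfl; intro s' _
  simp [detPol, Finset.sum_ite_eq', mul_ite]

lemma stDist_expR_shift [DecidableEq A] (M : MDP S A) (d : S → A) (f : S → ℝ) (t k : ℕ) :
    ∑ s, stDist M (detPol d) (t+1) s * expR M d f k s
      = ∑ s, stDist M (detPol d) t s * expR M d f (k+1) s := by
  have : ∀ s, stDist M (detPol d) (t+1) s * expR M d f k s
      = ∑ s', stDist M (detPol d) t s' * (M.P s' (d s') s * expR M d f k s) := by
    intro s
    rw [stDist_det, Finset.sum_mul]
    apply Finset.sum_congr rfl; intro s' _; ring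
  rw [Finset.sum_congr rfl fun s _ => this s, Finset.sum_comm]
  apply Finset.sum_congr rfl; intro s' _
  rw [← Finset.mul_sum]
  rfl

lemma stDist_expR [DecidableEq A] (M : MDP S A) (d : S → A) (f : S → ℝ) :
    ∀ t k, ∑ s, stDist M (detPol d) t s * expR M d f k s
      = ∑ s, M.σ s * expR M d f (t+k) s := by
  intro t
  induction t with
  | zero => intro k; simp [stDist]
  | succ t ih =>
    intro k
    rw [stDist_expR_shift, ih (k+1)]
    apply Finset.sum_congr rfl; intro s _
    congr 2
    omega

end Aux2
section Aux3
variable {S A : Type} [Fintype S] [Fintype A]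

lemma occ_det [DecidableEq A] (M : MDP S A) (d : S → A) (s : S) (a : A) :
    occ M (detPol d) s a = if a = d s then stateOcc M (detPol d) s else 0 := by
  rw [occ_eq]
  by_cases h : a = d s <;> simp [detPol, h]

lemma scoreE_det [DecidableEq A] (M : MDP S A) (d : S → A)
    (R : EuclideanSpace ℝ (S × A)) :
    scoreE M (detPol d) R = ∑ s, stateOcc M (detPol d) s * R (s, d s) := by
  unfold scoreE
  rw [Fintype.sum_prod_type]
  apply Finset.sum_congr rfl; intro s _
  rw [Finset.sum_congr rfl fun a _ => by rw [occ_det]]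
  simp [Finset.sum_ite_eq', ite_mul]

lemma scoreE_det_eq_Vd [DecidableEq A] (M : MDP S A) (d : S → A)
    (R : EuclideanSpace ℝ (S × A)) :
    scoreE M (detPol d) R
      = (1 - M.γ) * ∑ s, M.σ s * Vd M d (fun s => R (s, d s)) s := by
  set f : S → ℝ := fun s => R (s, d s) with hf
  have hpol := detPol_isPolicy (S := S) d
  rw [scoreE_det]
  have h1 : ∀ s, stateOcc M (detPol d) s * R (s, d s)
      = (1 - M.γ) * ∑' t : ℕ, (M.γ ^ t * stDist M (detPol d) t s) * f s := by
    intro s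
    unfold stateOcc
    rw [mul_assoc, tsum_mul_right]
  rw [Finset.sum_congr rfl fun s _ => h1 s, ← Finset.mul_sum]
  congr 1
  rw [← Summable.tsum_finsetSum (fun s _ => (summable_stDist M hpol s).mul_right (f s))]
  have h2 : ∀ t : ℕ, ∑ s, (M.γ ^ t * stDist M (detPol d) t s) * f s
      = ∑ s, M.σ s * (M.γ ^ t * expR M d f t s) := by
    intro t
    have h3 : ∑ s, stDist M (detPol d) t s * expR M d f 0 s
        = ∑ s, M.σ s * expR M d f (t + 0) s := stDist_expR M d f t 0
    simp only [Nat.add_zero] at h3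
    calc ∑ s, (M.γ ^ t * stDist M (detPol d) t s) * f s
        = M.γ ^ t * ∑ s, stDist M (detPol d) t s * expR M d f 0 s := by
          rw [Finset.mul_sum]; apply Finset.sum_congr rfl; intro s _
          show _ = M.γ ^ t * (stDist M (detPol d) t s * f s); ring
      _ = M.γ ^ t * ∑ s, M.σ s * expR M d f t s := by rw [h3]
      _ = ∑ s, M.σ s * (M.γ ^ t * expR M d f t s) := by
          rw [Finset.mul_sum]; apply Finset.sum_congr rfl; intro s _; ring
  rw [tsum_congr h2, Summable.tsum_finsetSum (fun s _ => (summable_expR M d f s).mul_left (M.σ s))]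
  apply Finset.sum_congr rfl; intro s _
  rw [tsum_mul_left]
  rfl

lemma flow (M : MDP S A) {π : S → A → ℝ} (hπ : isPolicy π) (s' : S) :
    stateOcc M π s' = (1 - M.γ) * M.σ s'
      + M.γ * ∑ s, ∑ a, occ M π s a * M.P s a s' := by
  unfold stateOcc
  rw [Summable.tsum_eq_zero_add (summable_stDist M hπ s')]
  have h0 : M.γ ^ 0 * stDist M π 0 s' = M.σ s' := by simp [stDist]
  rw [h0, mul_add]
  congr 1
  have h1 : ∀ t : ℕ, M.γ ^ (t+1) * stDist M π (t+1) s'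
      = ∑ s, ∑ a, M.γ * ((M.γ ^ t * saDist M π t s a) * M.P s a s') := by
    intro t
    show M.γ ^ (t+1) * (∑ s, ∑ a, stDist M π t s * π s a * M.P s a s') = _
    rw [Finset.mul_sum]
    apply Finset.sum_congr rfl; intro s _
    rw [Finset.mul_sum]
    apply Finset.sum_congr rfl; intro a _
    rw [saDist_eq]; ring
  calc (1 - M.γ) * ∑' t : ℕ, M.γ ^ (t+1) * stDist M π (t+1) s'
      = (1 - M.γ) * ∑ s, ∑ a, ∑' t : ℕ,
          M.γ * ((M.γ ^ t * saDist M π t s a) * M.P s a s') := by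
        rw [tsum_congr h1, Summable.tsum_finsetSum (fun s _ => summable_sum fun a _ =>
          ((summable_saDist M hπ s a).mul_right _).mul_left _)]
        congr 1
        exact Finset.sum_congr rfl fun s _ => Summable.tsum_finsetSum (fun a _ =>
          ((summable_saDist M hπ s a).mul_right _).mul_left _)
    _ = M.γ * ∑ s, ∑ a, occ M π s a * M.P s a s' := by
        rw [Finset.mul_sum, Finset.mul_sum]
        apply Finset.sum_congr rfl; intro s _
        rw [Finset.mul_sum, Finset.mul_sum]
        apply Finset.sum_congr rfl; intro a _
        rw [tsum_mul_left, tsum_mul_right]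
        unfold occ; ring

end Aux3
section Aux4
variable {S A : Type} [Fintype S] [Fintype A]

lemma sum_occ (M : MDP S A) {π : S → A → ℝ} (hπ : isPolicy π) (s : S) :
    ∑ a, occ M π s a = stateOcc M π s := by
  rw [Finset.sum_congr rfl fun a _ => occ_eq M π s a, ← Finset.mul_sum, hπ.2, mul_one]

/-- The advantage of action `a` in state `s` with respect to the deterministic policy `d`. -/
noncomputable def Adv [DecidableEq A] (M : MDP S A) (d : S → A)
    (R : EuclideanSpace ℝ (S × A)) (s : S) (a : A) : ℝ :=
  R (s, a) + M.γ * ∑ s', M.P s a s' * Vd M d (fun s'' => R (s'', d s'')) s'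
    - Vd M d (fun s'' => R (s'', d s'')) s

lemma Adv_det [DecidableEq A] (M : MDP S A) (d : S → A)
    (R : EuclideanSpace ℝ (S × A)) (s : S) : Adv M d R s (d s) = 0 := by
  have h := Vd_bellman M d (fun s'' => R (s'', d s'')) s
  unfold Adv
  linarith

lemma pdl [DecidableEq A] (M : MDP S A) (d : S → A) {π : S → A → ℝ}
    (hπ : isPolicy π) (R : EuclideanSpace ℝ (S × A)) :
    scoreE M π R = scoreE M (detPol d) R + ∑ s, ∑ a, occ M π s a * Adv M d R s a := by
  set V : S → ℝ := Vd M d (fun s'' => R (s'', d s'')) with hV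
  have split : ∀ s a, occ M π s a * Adv M d R s a
      = occ M π s a * R (s, a)
        + (∑ s', M.γ * (occ M π s a * (M.P s a s' * V s')))
        - occ M π s a * V s := by
    intro s a
    unfold Adv
    rw [← hV]
    rw [show (∑ s', M.γ * (occ M π s a * (M.P s a s' * V s')))
        = occ M π s a * (M.γ * ∑ s', M.P s a s' * V s') by
      rw [Finset.mul_sum, Finset.mul_sum]
      apply Finset.sum_congr rfl; intro s' _; ring]
    ring
  have hA : ∑ s, ∑ a, occ M π s a * R (s, a) = scoreE M π R := by
    rw [scoreE, Fintype.sum_prod_type]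
  have hC : ∑ s, ∑ a, occ M π s a * V s = ∑ s, stateOcc M π s * V s := by
    apply Finset.sum_congr rfl; intro s _
    rw [← Finset.sum_mul, sum_occ M hπ]
  have hB : ∑ s, ∑ a, ∑ s', M.γ * (occ M π s a * (M.P s a s' * V s'))
      = ∑ s, stateOcc M π s * V s - (1 - M.γ) * ∑ s, M.σ s * V s := by
    rw [Finset.sum_congr rfl fun s _ => Finset.sum_comm, Finset.sum_comm]
    have hflow : ∀ s', ∑ s, ∑ a, M.γ * (occ M π s a * (M.P s a s' * V s'))
        = stateOcc M π s' * V s' - (1 - M.γ) * (M.σ s' * V s') := by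
      intro s'
      have h1 : ∑ s, ∑ a, M.γ * (occ M π s a * (M.P s a s' * V s'))
          = (M.γ * ∑ s, ∑ a, occ M π s a * M.P s a s') * V s' := by
        simp only [Finset.mul_sum, Finset.sum_mul]
        apply Finset.sum_congr rfl; intro s _
        apply Finset.sum_congr rfl; intro a _; ring
      have h2 := flow M hπ s'
      rw [h1]
      have : M.γ * ∑ s, ∑ a, occ M π s a * M.P s a s'
          = stateOcc M π s' - (1 - M.γ) * M.σ s' := by linarith
      rw [this]; ring
    rw [Finset.sum_congr rfl fun s' _ => hflow s', Finset.sum_sub_distrib,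
      ← Finset.mul_sum]
  rw [Finset.sum_congr rfl fun s _ => Finset.sum_congr rfl fun a _ => split s a]
  simp only [Finset.sum_add_distrib, Finset.sum_sub_distrib]
  rw [hA, hB, hC, scoreE_det_eq_Vd M d R, ← hV]
  ring

end Aux4
section Aux5
variable {S A : Type} [Fintype S] [Fintype A]

lemma neighbor_pdl [DecidableEq S] [DecidableEq A] (M : MDP S A) (d : S → A)
    (R : EuclideanSpace ℝ (S × A)) (s₀ : S) (a₀ : A) :
    scoreE M (detPol (neighbor d s₀ a₀)) R
      = scoreE M (detPol d) R
        + stateOcc M (detPol (neighbor d s₀ a₀)) s₀ * Adv M d R s₀ a₀ := by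
  set π' := detPol (neighbor d s₀ a₀) with hπ'
  rw [pdl M d (detPol_isPolicy (neighbor d s₀ a₀)) R]
  congr 1
  have hinner : ∀ s, ∑ a, occ M π' s a * Adv M d R s a
      = stateOcc M π' s * Adv M d R s (neighbor d s₀ a₀ s) := by
    intro s
    rw [Finset.sum_congr rfl fun a _ => by rw [hπ', occ_det, ← hπ']]
    simp [Finset.sum_ite_eq', ite_mul]
  rw [Finset.sum_congr rfl fun s _ => hinner s]
  rw [Finset.sum_eq_single s₀]
  · simp [neighbor]
  · intro s _ hs
    have : neighbor d s₀ a₀ s = d s := by simp [neighbor, hs]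
    rw [this, Adv_det, mul_zero]
  · intro h; exact absurd (Finset.mem_univ s₀) h

lemma Adv_neg [DecidableEq S] [DecidableEq A] (M : MDP S A) (πt : S → A)
    (herg : ∀ π : S → A → ℝ, isPolicy π → ∀ s, 0 < stateOcc M π s)
    {εt : ℝ} (hεt : 0 < εt) (Rhat : EuclideanSpace ℝ (S × A))
    (hC : inC M πt εt Rhat) {s : S} {a : A} (ha : a ≠ πt s) :
    Adv M πt Rhat s a < 0 := by
  have hp := neighbor_pdl M πt Rhat s a
  have hc := hC s a ha
  have hpos := herg (detPol (neighbor πt s a)) (detPol_isPolicy _) s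
  nlinarith [hpos, hp, hc]

lemma exists_pos_off {πt : S → A} {π : S → A → ℝ} [DecidableEq A]
    (hπ : isPolicy π) (hne : π ≠ detPol πt) :
    ∃ s a, a ≠ πt s ∧ 0 < π s a := by
  by_contra h
  push_neg at h
  have hzero : ∀ s a, a ≠ πt s → π s a = 0 := fun s a ha =>
    le_antisymm (h s a ha) (hπ.1 s a)
  apply hne
  funext s a
  have hsum := hπ.2 s
  rw [← Finset.add_sum_erase Finset.univ (π s) (Finset.mem_univ (πt s))] at hsum
  have herase : ∑ a' ∈ Finset.univ.erase (πt s), π s a' = 0 :=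
    Finset.sum_eq_zero fun a' ha' => hzero s a' (Finset.mem_erase.mp ha').1
  rw [herase, add_zero] at hsum
  by_cases hcase : a = πt s
  · rw [hcase, hsum]; simp [detPol]
  · rw [hzero s a hcase]; simp [detPol, hcase]

lemma strict_opt [DecidableEq S] [DecidableEq A] (M : MDP S A) (πt : S → A)
    (herg : ∀ π : S → A → ℝ, isPolicy π → ∀ s, 0 < stateOcc M π s)
    {εt : ℝ} (hεt : 0 < εt) (Rhat : EuclideanSpace ℝ (S × A))
    (hC : inC M πt εt Rhat) {π : S → A → ℝ} (hπ : isPolicy π)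
    (hne : π ≠ detPol πt) :
    scoreE M π Rhat < scoreE M (detPol πt) Rhat := by
  obtain ⟨s₀, a₀, ha₀, hpos₀⟩ := exists_pos_off hπ hne
  rw [pdl M πt hπ Rhat]
  have hterm : ∀ s a, occ M π s a * Adv M πt Rhat s a ≤ 0 := by
    intro s a
    have hocc : 0 ≤ occ M π s a := by
      rw [occ_eq]
      exact mul_nonneg (le_of_lt (herg π hπ s)) (hπ.1 s a)
    by_cases hcase : a = πt s
    · rw [hcase, Adv_det, mul_zero]
    · exact mul_nonpos_of_nonneg_of_nonpos hocc
        (le_of_lt (Adv_neg M πt herg hεt Rhat hC hcase))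
  have hsum : ∑ s, ∑ a, occ M π s a * Adv M πt Rhat s a < 0 := by
    have houter : ∀ s, ∑ a, occ M π s a * Adv M πt Rhat s a ≤ 0 := fun s =>
      Finset.sum_nonpos fun a _ => hterm s a
    have hs₀ : ∑ a, occ M π s₀ a * Adv M πt Rhat s₀ a < 0 := by
      have hlt : occ M π s₀ a₀ * Adv M πt Rhat s₀ a₀ < 0 := by
        apply mul_neg_of_pos_of_neg
        · rw [occ_eq]; exact mul_pos (herg π hπ s₀) hpos₀
        · exact Adv_neg M πt herg hεt Rhat hC ha₀
      calc ∑ a, occ M π s₀ a * Adv M πt Rhat s₀ a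
          < ∑ _a : A, (0:ℝ) :=
            Finset.sum_lt_sum (fun a _ => hterm s₀ a) ⟨a₀, Finset.mem_univ a₀, hlt⟩
        _ = 0 := by simp
    calc ∑ s, ∑ a, occ M π s a * Adv M πt Rhat s a
        < ∑ _s : S, (0:ℝ) :=
          Finset.sum_lt_sum (fun s _ => houter s) ⟨s₀, Finset.mem_univ s₀, hs₀⟩
      _ = 0 := by simp
  linarith

lemma scoreE_comb (M : MDP S A) (π : S → A → ℝ)
    (X Y : EuclideanSpace ℝ (S × A)) (t : ℝ) :
    scoreE M π (X + t • (Y - X))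
      = scoreE M π X + t * (scoreE M π Y - scoreE M π X) := by
  unfold scoreE
  simp only [PiLp.add_apply, PiLp.smul_apply, PiLp.sub_apply, smul_eq_mul]
  rw [Finset.sum_congr rfl fun p _ => show
    occ M π p.1 p.2 * (X p + t * (Y p - X p))
      = occ M π p.1 p.2 * X p
        + (t * (occ M π p.1 p.2 * Y p) - t * (occ M π p.1 p.2 * X p)) by ring]
  rw [Finset.sum_add_distrib, Finset.sum_sub_distrib, ← Finset.mul_sum, ← Finset.mul_sum]
  ring

end Aux5
/-- if ε† > ε_D > 0 and R̂ = A(R̄, π†, ε†), then the set of plausible true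
rewards `{R : R̂ = A(R, π†, ε) for some 0 < ε ≤ ε_D}` is just `{R̂}`, and the robust
defense degenerates to the target policy: π† is the unique maximizer of ρ̂. -/
theorem underestimate_degenerates [DecidableEq S] [DecidableEq A]
    (M : MDP S A) (πt : S → A) (εt εD : ℝ) (hεD : 0 < εD) (hlt : εD < εt)
    (herg : ∀ π : S → A → ℝ, isPolicy π → ∀ s, 0 < stateOcc M π s)
    (Rbar Rhat : EuclideanSpace ℝ (S × A))
    (hatt : isAttack M πt εt Rbar Rhat) :
    {R : EuclideanSpace ℝ (S × A) | ∃ ε, 0 < ε ∧ ε ≤ εD ∧ isAttack M πt ε R Rhat}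
        = {Rhat} ∧
    ∀ π : S → A → ℝ, isPolicy π → π ≠ detPol πt →
      scoreE M π Rhat < scoreE M (detPol πt) Rhat := by
  constructor
  · ext R
    simp only [Set.mem_setOf_eq, Set.mem_singleton_iff]
    constructor
    · rintro ⟨ε, hε0, hεle, hCh, hmin⟩
      set g : S → A → ℝ := fun s a =>
        (scoreE M (detPol πt) R - scoreE M (detPol (neighbor πt s a)) R)
          - (scoreE M (detPol πt) Rhat
              - scoreE M (detPol (neighbor πt s a)) Rhat) with hg
      set B : ℝ := ∑ s, ∑ a, |g s a| with hB
      have hB0 : 0 ≤ B :=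
        Finset.sum_nonneg fun s _ => Finset.sum_nonneg fun a _ => abs_nonneg _
      have hεlt : ε < εt := lt_of_le_of_lt hεle hlt
      set t : ℝ := min 1 ((εt - ε) / (B + 1)) with htdef
      have ht0 : 0 < t :=
        lt_min one_pos (div_pos (by linarith) (by linarith))
      have ht1 : t ≤ 1 := min_le_left _ _
      have htB : t * B ≤ εt - ε := by
        have h1 : t ≤ (εt - ε) / (B + 1) := min_le_right _ _
        have h2 : t * (B + 1) ≤ εt - ε := by
          rw [← le_div_iff₀ (by linarith : (0:ℝ) < B + 1)]
          exact h1
        nlinarith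
      set X : EuclideanSpace ℝ (S × A) := Rhat + t • (R - Rhat) with hX
      have habs : ∀ s a, |g s a| ≤ B := by
        intro s a
        calc |g s a| ≤ ∑ a', |g s a'| :=
              Finset.single_le_sum (f := fun a' => |g s a'|)
                (fun a' _ => abs_nonneg _) (Finset.mem_univ a)
          _ ≤ B := Finset.single_le_sum
              (f := fun s' => ∑ a', |g s' a'|)
              (fun s' _ => Finset.sum_nonneg fun a' _ => abs_nonneg _)
              (Finset.mem_univ s)
      have hXC : inC M πt ε X := by
        intro s a ha
        have h1 := hatt.1 s a ha
        have e1 := scoreE_comb M (detPol πt) Rhat R t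
        have e2 := scoreE_comb M (detPol (neighbor πt s a)) Rhat R t
        have hgsa : g s a = (scoreE M (detPol πt) R
            - scoreE M (detPol (neighbor πt s a)) R)
            - (scoreE M (detPol πt) Rhat
                - scoreE M (detPol (neighbor πt s a)) Rhat) := rfl
        have hx := abs_le.mp (habs s a)
        rw [hgsa] at hx
        show scoreE M (detPol πt) X
            ≥ scoreE M (detPol (neighbor πt s a)) X + ε
        rw [hX, e1, e2]
        nlinarith [hx.1, hx.2, ht0.le, htB, h1]
      have hle := hmin X hXC
      have hXR : X - R = (1 - t) • (Rhat - R) := by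
        rw [hX]; module
      rw [hXR, norm_smul, Real.norm_eq_abs,
        abs_of_nonneg (by linarith : (0:ℝ) ≤ 1 - t)] at hle
      have hnorm0 : ‖Rhat - R‖ ≤ 0 := by nlinarith [norm_nonneg (Rhat - R)]
      have hsub : Rhat - R = 0 :=
        norm_eq_zero.mp (le_antisymm hnorm0 (norm_nonneg _))
      have : Rhat = R := by
        have := sub_eq_zero.mp hsub; exact this
      exact this.symm
    · rintro rfl
      refine ⟨εD, hεD, le_refl εD, ⟨fun s a ha => ?_, fun R₂ _ => ?_⟩⟩
      · have := hatt.1 s a ha; linarith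
      · simpa using norm_nonneg (R₂ - Rhat)
  · intro π hπ hne
    exact strict_opt M πt herg (lt_trans hεD hlt) Rhat hatt.1 hπ hne
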